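/- Let S be a finite set and r : 2^S → ℤ a function, with dual rank r*(A) = |A| + r(S − A) − r(S). Then the triple (S, r, r*) is a demi-matroid if and only if r satisfies, for all p ∈ S and A, B ⊆ S: (a) 0 ≤ r(A) ≤ |A|; (b) if A ⊆ B then r(A) ≤ r(B); and (c) r(A ∪ {p}) ≤ r(A) + 1. -/

import Mathlib

/-- Brylawski's generalized dual rank function: `r*(A) = |A| + r(S - A) - r(S)`. -/
def dualRank {α : Type*} [DecidableEq α] (S : Finset α) (r : Finset α → ℤ)
    (A : Finset α) : ℤ :=
  (A.card : ℤ) + r (S \ A) - r S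

/-- A demi-matroid: both rank functions are nonnegative, subcardinal and
monotone, and they satisfy the duality identity
`|S - A| - r(S - A) = s(S) - s(A)`. -/
def IsDemiMatroid {α : Type*} [DecidableEq α] (S : Finset α)
    (r s : Finset α → ℤ) : Prop :=
  (∀ A ⊆ S, 0 ≤ r A ∧ r A ≤ A.card) ∧
  (∀ A ⊆ S, 0 ≤ s A ∧ s A ≤ A.card) ∧
  (∀ A B : Finset α, A ⊆ B → B ⊆ S → r A ≤ r B ∧ s A ≤ s B) ∧
  (∀ A ⊆ S, ((S \ A).card : ℤ) - r (S \ A) = s S - s A)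

lemma rank_union_le {α : Type*} [DecidableEq α] (S : Finset α) (r : Finset α → ℤ)
    (hstep : ∀ A ⊆ S, ∀ p ∈ S, r (A ∪ {p}) ≤ r A + 1) :
    ∀ Y ⊆ S, ∀ X ⊆ S, r (X ∪ Y) ≤ r X + Y.card := by
  intro Y
  induction Y using Finset.induction with
  | empty => intro _ X _; simp
  | insert a Y ha ih =>
    intro hYS X hXS
    have haS : a ∈ S := hYS (Finset.mem_insert_self a Y)
    have hY : Y ⊆ S := (Finset.subset_insert a Y).trans hYS
    have hkey : X ∪ insert a Y = (X ∪ Y) ∪ {a} := by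
      ext x; simp [Finset.mem_insert]
    rw [hkey, Finset.card_insert_of_notMem ha]
    have h1 : r ((X ∪ Y) ∪ {a}) ≤ r (X ∪ Y) + 1 :=
      hstep _ (Finset.union_subset hXS hY) a haS
    have h2 := ih hY X hXS
    push_cast
    linarith

/-- `(S, r, r*)` is a demi-matroid if and only if `r` is nonnegative and
subcardinal, monotone, and has unit rank increase. -/
theorem demiMatroid_iff {α : Type*} [DecidableEq α] (S : Finset α)
    (r : Finset α → ℤ) :
    IsDemiMatroid S r (dualRank S r) ↔
      ((∀ A ⊆ S, 0 ≤ r A ∧ r A ≤ A.card) ∧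
       (∀ A B : Finset α, A ⊆ B → B ⊆ S → r A ≤ r B) ∧
       (∀ A ⊆ S, ∀ p ∈ S, r (A ∪ {p}) ≤ r A + 1)) := by
  constructor
  · rintro ⟨hr, _hs, hmono, _hdual⟩
    refine ⟨hr, fun A B hAB hBS => (hmono A B hAB hBS).1, ?_⟩
    intro A hA p hp
    by_cases hpA : p ∈ A
    · have : A ∪ {p} = A := by
        ext x; simp [Finset.mem_insert]
        rintro rfl; exact hpA
      rw [this]; linarith
    · -- use monotonicity of dual rank on S\(A∪{p}) ⊆ S\A
      have hsub : S \ (A ∪ {p}) ⊆ S \ A := by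
        apply Finset.sdiff_subset_sdiff le_rfl
        exact Finset.subset_union_left
      have hSA : S \ A ⊆ S := Finset.sdiff_subset
      have hmono' := (hmono _ _ hsub hSA).2
      have hAp : A ∪ {p} ⊆ S := by
        apply Finset.union_subset hA
        simpa using hp
      have e1 : S \ (S \ A) = A := Finset.sdiff_sdiff_eq_self hA
      have e2 : S \ (S \ (A ∪ {p})) = A ∪ {p} := Finset.sdiff_sdiff_eq_self hAp
      have ecard : (S \ A).card = (S \ (A ∪ {p})).card + 1 := by
        have heq : S \ (A ∪ {p}) = (S \ A) \ {p} := by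
          ext x
          simp only [Finset.mem_sdiff, Finset.mem_union, Finset.mem_singleton]
          tauto
        rw [heq]
        have hpSA : p ∈ S \ A := Finset.mem_sdiff.2 ⟨hp, hpA⟩
        rw [Finset.card_sdiff_of_subset (Finset.singleton_subset_iff.2 hpSA)]
        have : 1 ≤ (S \ A).card := Finset.card_pos.2 ⟨p, hpSA⟩
        simp only [Finset.card_singleton]
        omega
      simp only [dualRank, e1, e2] at hmono'
      rw [ecard] at hmono'
      push_cast at hmono'
      linarith
  · rintro ⟨hr, hmono, hstep⟩
    have hrempty : r ∅ = 0 := by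
      have := hr ∅ (Finset.empty_subset S)
      simpa using le_antisymm (by simpa using this.2) this.1
    have key : ∀ Y ⊆ S, ∀ X ⊆ S, r (X ∪ Y) ≤ r X + Y.card :=
      rank_union_le S r hstep
    refine ⟨hr, ?_, ?_, ?_⟩
    · intro A hA
      constructor
      · -- 0 ≤ |A| + r(S\A) - r S, i.e. r S ≤ r(S\A) + |A|
        have : r ((S \ A) ∪ A) ≤ r (S \ A) + A.card := key A hA (S \ A) Finset.sdiff_subset
        have hun : (S \ A) ∪ A = S := by
          rw [Finset.sdiff_union_self_eq_union, Finset.union_eq_left.2 hA]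
        rw [hun] at this
        simp only [dualRank]
        linarith
      · have := hmono (S \ A) S Finset.sdiff_subset le_rfl
        simp only [dualRank]
        linarith
    · intro A B hAB hBS
      have hAS : A ⊆ S := hAB.trans hBS
      refine ⟨hmono A B hAB hBS, ?_⟩
      -- r(S\A) ≤ r(S\B) + |B\A|
      have hBA : B \ A ⊆ S := Finset.sdiff_subset.trans hBS
      have hkey := key (B \ A) hBA (S \ B) Finset.sdiff_subset
      have hun : (S \ B) ∪ (B \ A) = S \ A := by
        ext x
        simp only [Finset.mem_union, Finset.mem_sdiff]
        constructor
        · rintro (⟨h1, h2⟩ | ⟨h1, h2⟩)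
          · exact ⟨h1, fun hx => h2 (hAB hx)⟩
          · exact ⟨hBS h1, h2⟩
        · rintro ⟨h1, h2⟩
          by_cases hB : x ∈ B
          · exact Or.inr ⟨hB, h2⟩
          · exact Or.inl ⟨h1, hB⟩
      rw [hun] at hkey
      have hcard : (B \ A).card = B.card - A.card := by
        rw [Finset.card_sdiff_of_subset hAB]
      have hcard' : A.card ≤ B.card := Finset.card_le_card hAB
      simp only [dualRank]
      rw [hcard] at hkey
      push_cast [Nat.cast_sub hcard'] at hkey ⊢
      linarith
    · intro A hA
      simp only [dualRank, Finset.sdiff_self, hrempty,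
        Finset.sdiff_sdiff_eq_self hA]
      have : (S \ A).card = S.card - A.card := Finset.card_sdiff_of_subset hA
      rw [this]
      push_cast [Nat.cast_sub (Finset.card_le_card hA)]
      ring
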